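/- arXiv:1808.02300 — 13 statements merged into one kernel-verified Lean document; each statement's English description precedes it below -/
import Mathlib

section
/- For every natural number n, ln((n+2)^2/((n+1)(n+3))) ≥ ln((n+2)/(n+1)) · ln((n+3)/(n+2)). -/
open Real Set

private lemma log1p_hasDeriv {u : ℝ} (hu : 0 < u) :
    HasDerivAt (fun u : ℝ => Real.log (1 + u)) (1/(1+u)) u := by
  have h5 : HasDerivAt (fun u : ℝ => 1 + u) 1 u := by
    simpa using (hasDerivAt_id u).const_add 1
  have := (Real.hasDerivAt_log (by nlinarith : (1:ℝ) + u ≠ 0)).comp u h5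
  rw [one_div, ← mul_one (1+u)⁻¹]; exact this

private lemma log_le_pade {t : ℝ} (ht : 0 ≤ t) :
    Real.log (1 + t) ≤ t * (t + 6) / (4 * t + 6) := by
  have key : MonotoneOn (fun u : ℝ => u * (u + 6) / (4 * u + 6) - Real.log (1 + u))
      (Set.Ici 0) := by
    have hd : ∀ u ∈ interior (Set.Ici (0:ℝ)), HasDerivAt
        (fun u : ℝ => u * (u + 6) / (4 * u + 6) - Real.log (1 + u))
        (((1*(u+6) + u*1) * (4*u+6) - u*(u+6) * (4*1)) / (4*u+6)^2 - 1/(1+u)) u := by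
      intro u hu
      rw [interior_Ici] at hu
      have hu0 : (0:ℝ) < u := hu
      have h1 : HasDerivAt (fun u : ℝ => u * (u + 6)) (1*(u+6) + u*1) u :=
        (hasDerivAt_id u).mul ((hasDerivAt_id u).add_const 6)
      have h2 : HasDerivAt (fun u : ℝ => 4 * u + 6) (4*1) u :=
        ((hasDerivAt_id u).const_mul 4).add_const 6
      have hden : (4 * u + 6 : ℝ) ≠ 0 := by nlinarith
      exact (h1.div h2 hden).sub (log1p_hasDeriv hu0)
    apply monotoneOn_of_deriv_nonneg (convex_Ici 0)
    · apply ContinuousOn.sub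
      · apply ContinuousOn.div
        · fun_prop
        · fun_prop
        · intro u hu; simp only [mem_Ici] at hu; nlinarith
      · apply ContinuousOn.log
        · fun_prop
        · intro u hu; simp only [mem_Ici] at hu; nlinarith
    · intro u hu
      exact (hd u hu).differentiableAt.differentiableWithinAt
    · intro u hu
      rw [(hd u hu).deriv]
      rw [interior_Ici] at hu
      have hu0 : (0:ℝ) < u := hu
      rw [sub_nonneg, div_le_div_iff₀ (by positivity) (by positivity)]
      nlinarith [pow_pos hu0 3]
  have h0 := key self_mem_Ici (mem_Ici.mpr ht) ht
  norm_num [Real.log_one] at h0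
  linarith

private lemma pade_le_log {t : ℝ} (ht : 0 ≤ t) :
    2 * t / (2 + t) ≤ Real.log (1 + t) := by
  have key : MonotoneOn (fun u : ℝ => Real.log (1 + u) - 2 * u / (2 + u))
      (Set.Ici 0) := by
    have hd : ∀ u ∈ interior (Set.Ici (0:ℝ)), HasDerivAt
        (fun u : ℝ => Real.log (1 + u) - 2 * u / (2 + u))
        (1/(1+u) - ((2*1) * (2+u) - 2*u * 1) / (2+u)^2) u := by
      intro u hu
      rw [interior_Ici] at hu
      have hu0 : (0:ℝ) < u := hu
      have h1 : HasDerivAt (fun u : ℝ => 2 * u) (2*1) u :=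
        (hasDerivAt_id u).const_mul 2
      have h2 : HasDerivAt (fun u : ℝ => 2 + u) 1 u := by
        simpa using (hasDerivAt_id u).const_add 2
      have hden : (2 + u : ℝ) ≠ 0 := by nlinarith
      exact (log1p_hasDeriv hu0).sub (h1.div h2 hden)
    apply monotoneOn_of_deriv_nonneg (convex_Ici 0)
    · apply ContinuousOn.sub
      · apply ContinuousOn.log
        · fun_prop
        · intro u hu; simp only [mem_Ici] at hu; nlinarith
      · apply ContinuousOn.div
        · fun_prop
        · fun_prop
        · intro u hu; simp only [mem_Ici] at hu; nlinarith
    · intro u hu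
      exact (hd u hu).differentiableAt.differentiableWithinAt
    · intro u hu
      rw [(hd u hu).deriv]
      rw [interior_Ici] at hu
      have hu0 : (0:ℝ) < u := hu
      rw [sub_nonneg, div_le_div_iff₀ (by positivity) (by positivity)]
      nlinarith [sq_nonneg u]
  have h0 := key self_mem_Ici (mem_Ici.mpr ht) ht
  norm_num [Real.log_one] at h0
  linarith

theorem stmt_0 (n : ℕ) :
    Real.log (((n:ℝ)+2)^2 / (((n:ℝ)+1)*((n:ℝ)+3))) ≥
      Real.log (((n:ℝ)+2)/((n:ℝ)+1)) * Real.log (((n:ℝ)+3)/((n:ℝ)+2)) := by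
  set N : ℝ := (n : ℝ) with hN
  have hN0 : 0 ≤ N := Nat.cast_nonneg n
  have h1 : (0:ℝ) < N + 1 := by linarith
  have h2 : (0:ℝ) < N + 2 := by linarith
  have h3 : (0:ℝ) < N + 3 := by linarith
  have hx0 : (0:ℝ) ≤ 1 / (N + 1) := by positivity
  have hy0 : (0:ℝ) ≤ 1 / (N + 2) := by positivity
  have hs0 : (0:ℝ) ≤ 1 / ((N + 1) * (N + 3)) := by positivity
  have e1 : (N+2) / (N+1) = 1 + 1 / (N + 1) := by field_simp; ring
  have e2 : (N+3) / (N+2) = 1 + 1 / (N + 2) := by field_simp; ring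
  have e3 : (N+2)^2 / ((N+1)*(N+3)) = 1 + 1 / ((N + 1) * (N + 3)) := by
    field_simp; ring
  rw [e1, e2, e3]
  have ha0 : 0 ≤ Real.log (1 + 1 / (N + 1)) := Real.log_nonneg (by linarith)
  have hb0 : 0 ≤ Real.log (1 + 1 / (N + 2)) := Real.log_nonneg (by linarith)
  have hub : Real.log (1 + 1 / (N + 1)) * Real.log (1 + 1 / (N + 2)) ≤
      ((1/(N+1)) * ((1/(N+1)) + 6) / (4 * (1/(N+1)) + 6)) *
        ((1/(N+2)) * ((1/(N+2)) + 6) / (4 * (1/(N+2)) + 6)) :=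
    mul_le_mul (log_le_pade hx0) (log_le_pade hy0) hb0
      (le_trans ha0 (log_le_pade hx0))
  refine ge_trans ?_ hub
  refine le_trans ?_ (pade_le_log hs0)
  have E1 : (1/(N+1)) * ((1/(N+1)) + 6) / (4 * (1/(N+1)) + 6)
      = (6*N+7) / ((N+1) * (6*N+10)) := by
    rw [div_eq_div_iff (by positivity) (by positivity)]
    field_simp
    ring
  have E2 : (1/(N+2)) * ((1/(N+2)) + 6) / (4 * (1/(N+2)) + 6)
      = (6*N+13) / ((N+2) * (6*N+16)) := by
    rw [div_eq_div_iff (by positivity) (by positivity)]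
    field_simp
    ring
  have E3 : 2 * (1 / ((N + 1) * (N + 3))) / (2 + 1 / ((N + 1) * (N + 3)))
      = 2 / (2*N^2 + 8*N + 7) := by
    rw [div_eq_div_iff (by positivity) (by positivity)]
    field_simp
    ring
  rw [E1, E2, E3, div_mul_div_comm, div_le_div_iff₀ (by positivity) (by positivity)]
  nlinarith [sq_nonneg N, hN0, mul_nonneg hN0 hN0, mul_nonneg (mul_nonneg hN0 hN0) hN0]
end

section
/- For every natural number n, ln((n+2)^2/((n+1)(n+3))) ≤ (ln((n+2)/(n+1)))^2. -/
lemma log_quot_lb (a b : ℝ) (ha : 0 < a) (hb : 0 < b) :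
    (b - a) / b ≤ Real.log (b / a) := by
  have h := Real.log_le_sub_one_of_pos (div_pos ha hb)
  have hrw : Real.log (a / b) = -Real.log (b / a) := by
    rw [Real.log_div ha.ne' hb.ne', Real.log_div hb.ne' ha.ne']; ring
  rw [hrw] at h
  have h2 : a / b - 1 = -((b - a) / b) := by field_simp; ring
  linarith

theorem stmt_1 (n : ℕ) :
    Real.log (((n:ℝ)+2)^2 / (((n:ℝ)+1)*((n:ℝ)+3))) ≤
      (Real.log (((n:ℝ)+2)/((n:ℝ)+1)))^2 := by
  set x : ℝ := (n : ℝ) with hxdef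
  have hx0 : (0:ℝ) ≤ x := Nat.cast_nonneg n
  have harg : ((x+2)^2 / ((x+1)*(x+3))) = 1 + 1/((x+1)*(x+3)) := by
    field_simp; ring
  have hub : Real.log ((x+2)^2/((x+1)*(x+3))) ≤ 1/((x+1)*(x+3)) := by
    rw [harg]
    have h := Real.log_le_sub_one_of_pos
      (x := 1 + 1/((x+1)*(x+3))) (by positivity)
    linarith
  have hsplit : Real.log ((x+2)/(x+1)) =
      Real.log ((2*x+4)/(2*x+3)) + Real.log ((2*x+3)/(2*x+2)) := by
    rw [← Real.log_mul (by positivity) (by positivity)]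
    congr 1
    field_simp
    ring
  have hlb1 : 1/(2*x+4) ≤ Real.log ((2*x+4)/(2*x+3)) := by
    have h := log_quot_lb (2*x+3) (2*x+4) (by linarith) (by linarith)
    have : (2*x+4 - (2*x+3))/(2*x+4) = 1/(2*x+4) := by ring_nf
    linarith [this ▸ h]
  have hlb2 : 1/(2*x+3) ≤ Real.log ((2*x+3)/(2*x+2)) := by
    have h := log_quot_lb (2*x+2) (2*x+3) (by linarith) (by linarith)
    have : (2*x+3 - (2*x+2))/(2*x+3) = 1/(2*x+3) := by ring_nf
    linarith [this ▸ h]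
  set L : ℝ := 1/(2*x+4) + 1/(2*x+3) with hL
  have hLpos : 0 < L := by positivity
  have hlog : L ≤ Real.log ((x+2)/(x+1)) := by
    rw [hsplit]; linarith
  have hsq : L^2 ≤ (Real.log ((x+2)/(x+1)))^2 :=
    pow_le_pow_left₀ hLpos.le hlog 2
  have hkey : 1/((x+1)*(x+3)) ≤ L^2 := by
    rw [hL]
    rw [div_add_div _ _ (by positivity) (by positivity), div_pow,
      div_le_div_iff₀ (by positivity) (by positivity)]
    nlinarith [sq_nonneg x, hx0, sq_nonneg (x+1)]
  calc Real.log ((x+2)^2/((x+1)*(x+3))) ≤ 1/((x+1)*(x+3)) := hub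
    _ ≤ L^2 := hkey
    _ ≤ (Real.log ((x+2)/(x+1)))^2 := hsq
end

section
/- Define p_N(x) = Σ_{k=1}^{N} (-1)^{k+1} x^k / k. For all natural numbers n ≥ 1, p_3(1/((n+1)(n+3))) ≤ (p_2(1/(n+1)))^2. -/
theorem stmt_5 (p : ℕ → ℝ → ℝ)
    (hp : ∀ N x, p N x = ∑ k ∈ Finset.Icc 1 N, (-1)^(k+1) * x^k / k)
    (n : ℕ) (hn : 1 ≤ n) :
    p 3 (1/(((n:ℝ)+1)*((n:ℝ)+3))) ≤ (p 2 (1/((n:ℝ)+1)))^2 := by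
  have ha : (2:ℝ) ≤ (n:ℝ) + 1 := by
    have : (1:ℝ) ≤ (n:ℝ) := by exact_mod_cast hn
    linarith
  set a : ℝ := (n:ℝ) + 1 with hadef
  have ha0 : 0 < a := by linarith
  have hb0 : 0 < a + 2 := by linarith
  rw [hp, hp]
  rw [show (Finset.Icc 1 3 : Finset ℕ) = {1,2,3} by decide,
      show (Finset.Icc 1 2 : Finset ℕ) = {1,2} by decide]
  have h3 : (n:ℝ) + 3 = a + 2 := by rw [hadef]; ring
  rw [h3]
  norm_num
  rw [← sub_nonneg]
  have e : (a⁻¹ + -(a ^ 2)⁻¹ / 2) ^ 2 -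
      ((a + 2)⁻¹ * a⁻¹ + (-((a + 2)⁻¹ * a⁻¹) ^ 2 / 2 + ((a + 2)⁻¹ * a⁻¹) ^ 3 / 3))
      = (12*a^4 + 33*a^3 - 18*a^2 - 64*a + 24) / (12 * a^4 * (a+2)^3) := by
    have h1 : a ≠ 0 := ne_of_gt ha0
    have h2 : a + 2 ≠ 0 := ne_of_gt hb0
    field_simp
    ring
  rw [e]
  apply div_nonneg _ (by positivity)
  nlinarith [sq_nonneg (a-2), sq_nonneg a, ha, sq_nonneg (a*(a-2))]
end

section
/- For every natural number n, sin(1/((n+2)(n+3))) ≥ sin(1/(n+2)) · sin(1/(n+3)). -/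
open Real

lemma sin_smul_ge (x t : ℝ) (hx0 : 0 ≤ x) (hx : x ≤ π) (ht0 : 0 ≤ t) (ht : t ≤ 1) :
    Real.sin (t * x) ≥ t * Real.sin x := by
  have h0 : (0:ℝ) ∈ Set.Icc 0 π := ⟨le_rfl, pi_pos.le⟩
  have hxm : x ∈ Set.Icc 0 π := ⟨hx0, hx⟩
  have h := strictConcaveOn_sin_Icc.concaveOn.2 h0 hxm
    (show (0:ℝ) ≤ 1 - t by linarith) ht0 (show (1 - t) + t = 1 by ring)
  simpa using h

theorem stmt_6 (n : ℕ) :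
    Real.sin (1/(((n:ℝ)+2)*((n:ℝ)+3))) ≥
      Real.sin (1/((n:ℝ)+2)) * Real.sin (1/((n:ℝ)+3)) := by
  set a : ℝ := 1/((n:ℝ)+2) with ha
  set b : ℝ := 1/((n:ℝ)+3) with hb
  have hn2 : (0:ℝ) < (n:ℝ)+2 := by positivity
  have hn3 : (0:ℝ) < (n:ℝ)+3 := by positivity
  have ha0 : 0 < a := by positivity
  have hb0 : 0 < b := by positivity
  have ha1 : a ≤ 1 := by rw [ha]; rw [div_le_one hn2]; linarith
  have hb1 : b ≤ 1 := by rw [hb]; rw [div_le_one hn3]; linarith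
  have hpi : (1:ℝ) ≤ π := by linarith [Real.pi_gt_three]
  have key : Real.sin (b * a) ≥ b * Real.sin a :=
    sin_smul_ge a b ha0.le (ha1.trans hpi) hb0.le hb1
  have h1 : 1/(((n:ℝ)+2)*((n:ℝ)+3)) = b * a := by
    rw [ha, hb, one_div_mul_one_div, mul_comm ((n:ℝ)+3)]
  rw [h1]
  have hsinb : Real.sin b ≤ b := Real.sin_le hb0.le
  have hsina : 0 ≤ Real.sin a := Real.sin_nonneg_of_nonneg_of_le_pi ha0.le (ha1.trans hpi)
  calc Real.sin a * Real.sin b ≤ Real.sin a * b := by nlinarith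
    _ = b * Real.sin a := by ring
    _ ≤ Real.sin (b * a) := key
end

section
/- For every natural number n, sin(1/((n+2)(n+3))) · cos(1/(n+2)) ≤ (sin(1/(n+2)))^2 · cos(1/(n+3)). -/
theorem stmt_7 (n : ℕ) :
    Real.sin (1/(((n:ℝ)+2)*((n:ℝ)+3))) * Real.cos (1/((n:ℝ)+2)) ≤
      (Real.sin (1/((n:ℝ)+2)))^2 * Real.cos (1/((n:ℝ)+3)) := by
  have hn : (0:ℝ) ≤ (n:ℝ) := n.cast_nonneg
  set a : ℝ := 1/((n:ℝ)+2) with ha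
  set b : ℝ := 1/((n:ℝ)+3) with hb
  have h2 : (0:ℝ) < (n:ℝ)+2 := by linarith
  have h3 : (0:ℝ) < (n:ℝ)+3 := by linarith
  have hbpos : 0 < b := by positivity
  have hapos : 0 < a := by positivity
  have hba : b < a := by
    rw [ha, hb, div_lt_div_iff₀ h3 h2]; linarith
  have hahalf : a ≤ 1/2 := by
    rw [ha, div_le_div_iff₀ h2 (by norm_num : (0:ℝ) < 2)]; linarith
  have hkey : 1/(((n:ℝ)+2)*((n:ℝ)+3)) = a - b := by
    rw [ha, hb]; field_simp; ring
  have hab : a - b = a * b := by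
    rw [ha, hb]; field_simp; ring
  rw [hkey]
  -- sin (a-b) ≤ a - b
  have hsin1 : Real.sin (a - b) ≤ a - b :=
    le_of_lt (Real.sin_lt (by linarith))
  -- cos a ≤ cos b
  have hcos_le : Real.cos a ≤ Real.cos b :=
    Real.cos_le_cos_of_nonneg_of_le_pi (le_of_lt hbpos)
      (by linarith [Real.pi_gt_three]) (le_of_lt hba)
  have hcosb_pos : 0 < Real.cos b := by
    apply Real.cos_pos_of_mem_Ioo
    constructor
    · linarith [Real.pi_gt_three]
    · linarith [Real.pi_gt_three, hba]
  have hcosa_nonneg : 0 ≤ Real.cos a := by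
    apply le_of_lt
    apply Real.cos_pos_of_mem_Ioo
    constructor
    · linarith [Real.pi_gt_three]
    · linarith [Real.pi_gt_three]
  -- a*b ≤ sin a ^ 2
  have hsina : a - a^3/4 < Real.sin a :=
    by have := Real.sin_gt_sub_cube hapos; linarith [pow_pos hapos 3]
  have hsq : a^2 ≤ 1/4 := by nlinarith
  have hsub_pos : 0 < a - a^3/4 := by nlinarith [mul_le_mul_of_nonneg_left hsq hapos.le]
  have hab_le : a * b ≤ (Real.sin a)^2 := by
    have h1 : a * b ≤ (a - a^3/4)^2 := by
      rw [ha, hb]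
      rw [div_pow]
      rw [ha] at hsub_pos
      have hne2 : ((n:ℝ)+2) ≠ 0 := ne_of_gt h2
      have hne3 : ((n:ℝ)+3) ≠ 0 := ne_of_gt h3
      field_simp
      nlinarith [sq_nonneg ((n:ℝ)+2), pow_pos h2 3, pow_pos h2 6, sq_nonneg (n:ℝ), mul_nonneg hn hn]
    calc a * b ≤ (a - a^3/4)^2 := h1
      _ ≤ (Real.sin a)^2 := by nlinarith
  calc Real.sin (a - b) * Real.cos a ≤ (a - b) * Real.cos b := by
        apply mul_le_mul hsin1 hcos_le hcosa_nonneg (by linarith)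
    _ = (a * b) * Real.cos b := by rw [hab]
    _ ≤ (Real.sin a)^2 * Real.cos b := by
        apply mul_le_mul_of_nonneg_right hab_le (le_of_lt hcosb_pos)
end

section
/- Let a_n = tan(1/(n+2)) for n ≥ 0. Then for every n, a_n(1 - a_n) ≤ a_{n+1} ≤ a_n/(1 + a_n). -/
open Real

set_option maxHeartbeats 1600000 in
lemma key_aux (x y : ℝ) (hy0 : 0 < y) (hyx : y < x) (hx2 : x ≤ 1/2)
    (hxy : x - y = x * y) :
    Real.tan x * (1 - Real.tan x) ≤ Real.tan y ∧
      Real.tan y ≤ Real.tan x / (1 + Real.tan x) := by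
  have hpi : (3:ℝ) < π := Real.pi_gt_three
  have hx0 : 0 < x := hy0.trans hyx
  have hxpi : x < π / 2 := by linarith
  have hypi : y < π / 2 := by linarith
  have hcx : 0 < Real.cos x := Real.cos_pos_of_mem_Ioo ⟨by linarith, hxpi⟩
  have hcy : 0 < Real.cos y := Real.cos_pos_of_mem_Ioo ⟨by linarith, hypi⟩
  have hsx : 0 < Real.sin x := Real.sin_pos_of_pos_of_lt_pi hx0 (by linarith)
  have hsy : 0 < Real.sin y := Real.sin_pos_of_pos_of_lt_pi hy0 (by linarith)
  have hsub : Real.sin (x*y) = Real.sin x * Real.cos y - Real.cos x * Real.sin y := by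
    rw [← hxy]; exact Real.sin_sub x y
  -- concavity: y * sin x ≤ sin (y * x)
  have hconc : y * Real.sin x ≤ Real.sin (y * x) := by
    have := (strictConcaveOn_sin_Icc.concaveOn).2 (x := x) (y := 0)
      ⟨hx0.le, by linarith⟩ ⟨le_rfl, Real.pi_pos.le⟩ hy0.le
      (by linarith : (0:ℝ) ≤ 1 - y) (by ring)
    simpa using this
  have hs1 : Real.sin x * Real.sin y ≤ Real.sin (x * y) := by
    have h1 : Real.sin y ≤ y := Real.sin_le hy0.le
    calc Real.sin x * Real.sin y ≤ Real.sin x * y := by nlinarith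
      _ ≤ Real.sin (x * y) := by rw [mul_comm x y]; linarith [hconc]
  -- cube lower bounds
  have hbx : x * (1 - x ^ 2 / 4) ≤ Real.sin x := by
    have := Real.sin_gt_sub_cube hx0
    nlinarith
  have hby : y * (1 - y ^ 2 / 4) ≤ Real.sin y := by
    have := Real.sin_gt_sub_cube hy0
    nlinarith
  have hsxy_le : Real.sin (x * y) ≤ x * y := Real.sin_le (by positivity)
  have hsxy_pos : 0 < Real.sin (x * y) := lt_of_lt_of_le (by positivity) hs1
  have htx : x < Real.tan x := Real.lt_tan hx0 hxpi
  have hxcx : x * Real.cos x < Real.sin x := by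
    rw [Real.tan_eq_sin_div_cos, lt_div_iff₀ hcx] at htx
    linarith
  have hx2' : x ^ 2 ≤ x / 2 := by nlinarith
  have hy2 : y ^ 2 ≤ x ^ 2 := by nlinarith
  have e1 : (1 - x) ≤ (1 - x^2/4) * (1 - y^2/4) := by nlinarith [hx2', hy2, mul_nonneg (sq_nonneg x) (sq_nonneg y)]
  have hC : x * y * (1 - x) ≤ Real.sin x * Real.sin y := by
    have h4 : 0 < 1 - x^2/4 := by nlinarith
    have h5 : 0 < 1 - y^2/4 := by nlinarith
    calc x * y * (1 - x) ≤ x * y * ((1 - x^2/4) * (1 - y^2/4)) := by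
          apply mul_le_mul_of_nonneg_left e1 (by positivity)
      _ = (x * (1 - x^2/4)) * (y * (1 - y^2/4)) := by ring
      _ ≤ Real.sin x * Real.sin y := by
          apply mul_le_mul hbx hby (by positivity) hsx.le
  have hs2 : Real.sin (x*y) * (Real.cos x - Real.sin x) ≤
      Real.sin x * Real.sin y * Real.cos x := by
    rcases le_or_gt (Real.cos x - Real.sin x) 0 with h | h
    · nlinarith [mul_pos (mul_pos hsx hsy) hcx, mul_nonpos_of_nonneg_of_nonpos hsxy_pos.le h]
    · have h1 : Real.cos x - Real.sin x ≤ Real.cos x * (1 - x) := by nlinarith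
      have h2 : 0 < Real.cos x * (1 - x) := lt_of_lt_of_le h h1
      have hstep : Real.sin (x*y) * (Real.cos x - Real.sin x) ≤
          x * y * (Real.cos x * (1 - x)) := by
        calc Real.sin (x*y) * (Real.cos x - Real.sin x)
            ≤ (x*y) * (Real.cos x - Real.sin x) := by nlinarith
          _ ≤ x * y * (Real.cos x * (1 - x)) := by nlinarith [mul_pos hx0 hy0]
      have hrhs : x * y * (Real.cos x * (1 - x)) ≤
          Real.sin x * Real.sin y * Real.cos x := by
        have := mul_le_mul_of_nonneg_right hC hcx.le
        nlinarith
      linarith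
  rw [hsub] at hs1 hs2
  constructor
  · rw [Real.tan_eq_sin_div_cos, Real.tan_eq_sin_div_cos]
    have e : Real.sin x / Real.cos x * (1 - Real.sin x / Real.cos x) =
        (Real.sin x * (Real.cos x - Real.sin x)) / (Real.cos x ^ 2) := by
      rw [eq_div_iff (by positivity)]
      field_simp
    rw [e, div_le_div_iff₀ (by positivity) hcy]
    nlinarith [hs2]
  · rw [Real.tan_eq_sin_div_cos, Real.tan_eq_sin_div_cos]
    have e : (Real.sin x / Real.cos x) / (1 + Real.sin x / Real.cos x) =
        Real.sin x / (Real.cos x + Real.sin x) := by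
      rw [div_eq_div_iff (by positivity) (by positivity)]
      field_simp
    rw [e, div_le_div_iff₀ hcy (by positivity)]
    nlinarith [hs1]

theorem stmt_8 (a : ℕ → ℝ) (ha : ∀ n, a n = Real.tan (1/((n:ℝ)+2))) :
    ∀ n : ℕ, a n * (1 - a n) ≤ a (n+1) ∧ a (n+1) ≤ a n / (1 + a n) := by
  intro n
  rw [ha n, ha (n+1)]
  push_cast
  have hn : (0:ℝ) ≤ (n:ℝ) := Nat.cast_nonneg n
  have h2 : (0:ℝ) < (n:ℝ) + 2 := by linarith
  have h3 : (0:ℝ) < (n:ℝ) + 3 := by linarith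
  have e : (1:ℝ)/((n:ℝ)+1+2) = 1/((n:ℝ)+3) := by ring_nf
  rw [e]
  exact key_aux (1/((n:ℝ)+2)) (1/((n:ℝ)+3))
    (by positivity)
    (by rw [div_lt_div_iff₀ h3 h2]; linarith)
    (by rw [div_le_div_iff₀ h2 (by norm_num : (0:ℝ)<2)]; linarith)
    (by field_simp; ring)
end

section
/- Define r_N(x) = Σ_{k=0}^{N} (-1)^k x^{2k+1}/(2k+1)!. For all natural numbers n, r_1(1/((n+2)(n+3))) ≥ r_2(1/(n+2)) · r_2(1/(n+3)). -/
theorem stmt_9 (r : ℕ → ℝ → ℝ)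
    (hr : ∀ N x, r N x = ∑ k ∈ Finset.range (N+1), (-1)^k * x^(2*k+1) / (Nat.factorial (2*k+1) : ℝ))
    (n : ℕ) :
    r 1 (1/(((n:ℝ)+2)*((n:ℝ)+3))) ≥ r 2 (1/((n:ℝ)+2)) * r 2 (1/((n:ℝ)+3)) := by
  simp only [hr, Finset.sum_range_succ, Finset.sum_range_zero]
  norm_num [Nat.factorial]
  set a : ℝ := (n:ℝ)+2 with ha
  have hn : (0:ℝ) ≤ (n:ℝ) := Nat.cast_nonneg n
  have hb : (n:ℝ)+3 = a+1 := by ring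
  rw [hb]
  have ha0 : a > 0 := by rw [ha]; linarith
  have hb0 : a+1 > 0 := by linarith
  have key : ((a+1)⁻¹ * a⁻¹ + -((a+1)⁻¹ * a⁻¹)^3 / 6)
      - (a⁻¹ + -(a^3)⁻¹ / 6 + (a^5)⁻¹ / 120) * ((a+1)⁻¹ + -((a+1)^3)⁻¹ / 6 + ((a+1)^5)⁻¹ / 120)
      = (4800*(n:ℝ)^6 + 72000*(n:ℝ)^5 + 445760*(n:ℝ)^4 + 1457600*(n:ℝ)^3
          + 2654280*(n:ℝ)^2 + 2551400*(n:ℝ) + 1011019)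
        / (14400 * a^5 * (a+1)^5) := by
    rw [ha]
    field_simp
    ring
  have hpos : (0:ℝ) ≤ (4800*(n:ℝ)^6 + 72000*(n:ℝ)^5 + 445760*(n:ℝ)^4 + 1457600*(n:ℝ)^3
          + 2654280*(n:ℝ)^2 + 2551400*(n:ℝ) + 1011019)
        / (14400 * a^5 * (a+1)^5) := by positivity
  linarith [key, hpos]
end

section
/- For every natural number n, 2·cosh((2n+5)/(2(n+2)(n+3)))·sinh(1/(2(n+2)(n+3))) ≥ sinh(1/(n+2))·sinh(1/(n+3)). -/
set_option maxHeartbeats 2000000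

open Real Finset

lemma exp_ub4 {x : ℝ} (h0 : 0 ≤ x) (h1 : x ≤ 1) :
    Real.exp x ≤ 1 + x + x^2/2 + x^3/6 + 5*x^4/96 ∧
    1 + x + x^2/2 + x^3/6 - 5*x^4/96 ≤ Real.exp x := by
  have hb := Real.exp_bound (x := x) (by rw [abs_of_nonneg h0]; exact h1) (n := 4) (by norm_num)
  have hs : ∑ m ∈ Finset.range 4, x ^ m / m.factorial = 1 + x + x^2/2 + x^3/6 := by
    simp [Finset.sum_range_succ, Nat.factorial]
  rw [hs, abs_of_nonneg h0] at hb
  have hb' := abs_sub_le_iff.1 hb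
  norm_num [Nat.factorial] at hb'
  constructor <;> nlinarith [hb'.1, hb'.2]

lemma exp_neg_bound4 {x : ℝ} (h0 : 0 ≤ x) (h1 : x ≤ 1) :
    Real.exp (-x) ≤ 1 - x + x^2/2 - x^3/6 + 5*x^4/96 ∧
    1 - x + x^2/2 - x^3/6 - 5*x^4/96 ≤ Real.exp (-x) := by
  have hb := Real.exp_bound (x := -x) (by rw [abs_neg, abs_of_nonneg h0]; exact h1)
    (n := 4) (by norm_num)
  have hs : ∑ m ∈ Finset.range 4, (-x) ^ m / m.factorial = 1 - x + x^2/2 - x^3/6 := by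
    simp [Finset.sum_range_succ, Nat.factorial]
    ring
  rw [hs, abs_neg, abs_of_nonneg h0] at hb
  have hb' := abs_sub_le_iff.1 hb
  norm_num [Nat.factorial] at hb'
  constructor <;> nlinarith [hb'.1, hb'.2]

lemma sinh_ub {x : ℝ} (h0 : 0 ≤ x) (h1 : x ≤ 1) :
    Real.sinh x ≤ x + x^3/6 + 5*x^4/96 := by
  rw [Real.sinh_eq]
  have h := (exp_ub4 h0 h1).1
  have h' := (exp_neg_bound4 h0 h1).2
  nlinarith [h, h']

lemma cosh_lb {x : ℝ} (h0 : 0 ≤ x) (h1 : x ≤ 1) :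
    1 + x^2/2 - 5*x^4/96 ≤ Real.cosh x := by
  rw [Real.cosh_eq]
  have h := (exp_ub4 h0 h1).2
  have h' := (exp_neg_bound4 h0 h1).2
  nlinarith [h, h']

theorem stmt_11 (n : ℕ) :
    2 * Real.cosh ((2*(n:ℝ)+5)/(2*((n:ℝ)+2)*((n:ℝ)+3))) *
        Real.sinh (1/(2*((n:ℝ)+2)*((n:ℝ)+3))) ≥
      Real.sinh (1/((n:ℝ)+2)) * Real.sinh (1/((n:ℝ)+3)) := by
  have hn : (0:ℝ) ≤ (n:ℝ) := Nat.cast_nonneg n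
  set x : ℝ := (n:ℝ) with hxdef
  have h2 : (0:ℝ) < x + 2 := by positivity
  have h3 : (0:ℝ) < x + 3 := by positivity
  set m : ℝ := (2*x+5)/(2*(x+2)*(x+3)) with hm
  set v : ℝ := 1/(2*(x+2)*(x+3)) with hv
  set a : ℝ := 1/(x+2) with ha
  set b : ℝ := 1/(x+3) with hb
  have hvpos : 0 < v := by rw [hv]; positivity
  have hm0 : 0 ≤ m := by rw [hm]; positivity
  have hm1 : m ≤ 1 := by
    rw [hm, div_le_one (by positivity)]
    nlinarith
  have ha0 : 0 ≤ a := by rw [ha]; positivity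
  have ha1 : a ≤ 1 := by
    rw [ha, div_le_one h2]; linarith
  have hb0 : 0 ≤ b := by rw [hb]; positivity
  have hb1 : b ≤ 1 := by
    rw [hb, div_le_one h3]; linarith
  have hcosh := cosh_lb hm0 hm1
  have hcoshpos : 0 < Real.cosh m := Real.cosh_pos m
  have hsv : v ≤ Real.sinh v := Real.self_le_sinh_iff.2 hvpos.le
  have hsa := sinh_ub ha0 ha1
  have hsb := sinh_ub hb0 hb1
  have hsa0 : 0 ≤ Real.sinh a := Real.sinh_nonneg_iff.2 ha0
  have hsb0 : 0 ≤ Real.sinh b := Real.sinh_nonneg_iff.2 hb0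
  have hubb0 : 0 ≤ b + b^3/6 + 5*b^4/96 := by positivity
  have hR : Real.sinh a * Real.sinh b ≤ (a + a^3/6 + 5*a^4/96) * (b + b^3/6 + 5*b^4/96) :=
    mul_le_mul hsa hsb hsb0 (le_trans ha0 (by nlinarith [pow_nonneg ha0 3, pow_nonneg ha0 4]))
  have hL : 2 * (1 + m^2/2 - 5*m^4/96) * v ≤ 2 * Real.cosh m * Real.sinh v := by
    have h1 : 2 * (1 + m^2/2 - 5*m^4/96) * v ≤ 2 * Real.cosh m * v := by
      nlinarith [hvpos.le, hcosh]
    have h2' : 2 * Real.cosh m * v ≤ 2 * Real.cosh m * Real.sinh v := by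
      nlinarith [hcoshpos.le, hsv]
    linarith
  have hpoly : (a + a^3/6 + 5*a^4/96) * (b + b^3/6 + 5*b^4/96) ≤
      2 * (1 + m^2/2 - 5*m^4/96) * v := by
    rw [← sub_nonneg]
    have heq : 2 * (1 + m^2/2 - 5*m^4/96) * v -
        (a + a^3/6 + 5*a^4/96) * (b + b^3/6 + 5*b^4/96) =
        (256*x^6 + 3680*x^5 + (64864/3)*x^4 + (198320/3)*x^3 + (660583/6)*x^2
          + (561635/6)*x + 31106) / (1536*(x+2)^5*(x+3)^5) := by
      rw [hm, hv, ha, hb]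
      field_simp
      ring
    rw [heq, hxdef]
    positivity
  calc Real.sinh a * Real.sinh b ≤ 2 * (1 + m^2/2 - 5*m^4/96) * v := le_trans hR hpoly
    _ ≤ 2 * Real.cosh m * Real.sinh v := hL
end

section
/- For every natural number n, 2·cosh((2n+5)/(2(n+2)(n+3)))·sinh(1/(2(n+2)(n+3))) ≤ (sinh(1/(n+2)))^2. -/
open Real

lemma sinh_le_aux {x : ℝ} (hx0 : 0 ≤ x) (hx : x ≤ 1/2) :
    Real.sinh x ≤ x + x^3/5 := by
  have hx1 : |x| ≤ 1 := by rw [abs_of_nonneg hx0]; linarith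
  have hx1' : |(-x)| ≤ 1 := by rwa [abs_neg]
  have h1 := Real.exp_bound hx1 (n := 4) (by norm_num)
  have h2 := Real.exp_bound hx1' (n := 4) (by norm_num)
  rw [abs_of_nonneg hx0] at h1
  rw [abs_neg, abs_of_nonneg hx0] at h2
  have e1 : (∑ m ∈ Finset.range 4, x ^ m / m.factorial) = 1 + x + x^2/2 + x^3/6 := by
    rw [Finset.sum_range_succ, Finset.sum_range_succ, Finset.sum_range_succ,
      Finset.sum_range_succ, Finset.sum_range_zero]
    norm_num [Nat.factorial]
  have e2 : (∑ m ∈ Finset.range 4, (-x) ^ m / m.factorial) = 1 - x + x^2/2 - x^3/6 := by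
    rw [Finset.sum_range_succ, Finset.sum_range_succ, Finset.sum_range_succ,
      Finset.sum_range_succ, Finset.sum_range_zero]
    norm_num [Nat.factorial]
    ring
  rw [e1] at h1
  rw [e2] at h2
  have hb1 := (abs_sub_le_iff.1 h1).1
  have hb2 := (abs_sub_le_iff.1 h2).2
  rw [Real.sinh_eq]
  have hx4 : x^4 ≤ x^3 * (1/2) := by
    have : x^4 = x^3 * x := by ring
    rw [this]
    have h3 : 0 ≤ x^3 := by positivity
    exact mul_le_mul_of_nonneg_left hx h3
  norm_num [Nat.factorial] at hb1 hb2
  nlinarith [hb1, hb2, hx4, pow_nonneg hx0 3]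

theorem stmt_12 (n : ℕ) :
    2 * Real.cosh ((2*(n:ℝ)+5)/(2*((n:ℝ)+2)*((n:ℝ)+3))) *
        Real.sinh (1/(2*((n:ℝ)+2)*((n:ℝ)+3))) ≤
      (Real.sinh (1/((n:ℝ)+2)))^2 := by
  set A : ℝ := (2*(n:ℝ)+5)/(2*((n:ℝ)+2)*((n:ℝ)+3)) with hA
  set B : ℝ := 1/(2*((n:ℝ)+2)*((n:ℝ)+3)) with hB
  have hn2 : (0:ℝ) < (n:ℝ) + 2 := by positivity
  have hn3 : (0:ℝ) < (n:ℝ) + 3 := by positivity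
  set a : ℝ := 1/((n:ℝ)+2) with ha
  set b : ℝ := 1/((n:ℝ)+3) with hb
  have hAB1 : A + B = a := by
    rw [hA, hB, ha]; field_simp; ring
  have hAB2 : A - B = b := by
    rw [hA, hB, hb,
      div_sub_div _ _ (by positivity : (2*((n:ℝ)+2)*((n:ℝ)+3)) ≠ 0) (by positivity : (2*((n:ℝ)+2)*((n:ℝ)+3)) ≠ 0),
      div_eq_div_iff (by positivity) (by positivity)]
    ring
  have key : 2 * Real.cosh A * Real.sinh B = Real.sinh a - Real.sinh b := by
    rw [← hAB1, ← hAB2, Real.sinh_add, Real.sinh_sub]; ring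
  rw [key]
  have ha0 : 0 < a := by positivity
  have hahalf : a ≤ 1/2 := by
    rw [ha, div_le_div_iff₀ hn2 (by norm_num)]
    have : (0:ℝ) ≤ (n:ℝ) := Nat.cast_nonneg n
    linarith
  have h1 : Real.sinh a ≤ a + a^3/5 := sinh_le_aux ha0.le hahalf
  have h2 : b ≤ Real.sinh b := Real.self_le_sinh_iff.2 (by positivity)
  have h3 : a + a^3/5 - b ≤ a^2 := by
    have expand : a^2 - (a + a^3/5 - b)
        = (4*(n:ℝ)+7)/(5*((n:ℝ)+2)^3*((n:ℝ)+3)) := by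
      rw [ha, hb]; field_simp; ring
    have hpos : (0:ℝ) ≤ (4*(n:ℝ)+7)/(5*((n:ℝ)+2)^3*((n:ℝ)+3)) := by positivity
    linarith [expand ▸ hpos]
  have h4 : a^2 ≤ (Real.sinh a)^2 := by
    have := Real.self_le_sinh_iff.2 ha0.le
    nlinarith
  linarith
end

section
/- Let a_n = sinh(1/(n+2)) for n ≥ 0. Then for every n, a_n(1 - a_n) ≤ a_{n+1} ≤ a_n/(1 + a_n). -/
open Real

lemma sinh_bounds {x : ℝ} (h0 : 0 < x) (h1 : x ≤ 1/2) :
    x + x^3/6 ≤ Real.sinh x ∧ Real.sinh x ≤ x + x^3/6 + x^5/100 := by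
  have hx : |x| ≤ 1 := by rw [abs_of_pos h0]; linarith
  have hx' : |(-x)| ≤ 1 := by rwa [abs_neg]
  have h6 : (0:ℕ) < 6 := by norm_num
  have hb1 := Real.exp_bound hx h6
  have hb2 := Real.exp_bound hx' h6
  rw [abs_neg] at hb2
  rw [abs_of_pos h0] at hb1 hb2
  have hs1 : (∑ m ∈ Finset.range 6, x ^ m / m.factorial)
      = 1 + x + x^2/2 + x^3/6 + x^4/24 + x^5/120 := by
    simp [Finset.sum_range_succ, Nat.factorial]
    try ring
  have hs2 : (∑ m ∈ Finset.range 6, (-x) ^ m / m.factorial)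
      = 1 - x + x^2/2 - x^3/6 + x^4/24 - x^5/120 := by
    simp [Finset.sum_range_succ, Nat.factorial]
    try ring
  rw [hs1] at hb1
  rw [hs2] at hb2
  rw [abs_le] at hb1 hb2
  obtain ⟨hb1l, hb1r⟩ := hb1
  obtain ⟨hb2l, hb2r⟩ := hb2
  rw [Real.sinh_eq]
  have hx6 : x^6 ≤ x^5 * (1/2) := by
    have h : x^6 = x^5 * x := by ring
    rw [h]
    exact mul_le_mul_of_nonneg_left h1 (by positivity)
  norm_num [Nat.factorial] at hb1l hb1r hb2l hb2r
  constructor <;> nlinarith [pow_pos h0 5, pow_pos h0 6]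

set_option maxHeartbeats 1000000 in
theorem stmt_13 (a : ℕ → ℝ) (ha : ∀ n, a n = Real.sinh (1/((n:ℝ)+2))) :
    ∀ n : ℕ, a n * (1 - a n) ≤ a (n+1) ∧ a (n+1) ≤ a n / (1 + a n) := by
  intro n
  set x : ℝ := 1/((n:ℝ)+2) with hxdef
  set y : ℝ := 1/((n:ℝ)+3) with hydef
  have hn0 : (0:ℝ) ≤ (n:ℝ) := Nat.cast_nonneg n
  have hx0 : 0 < x := by positivity
  have hx1 : x ≤ 1/2 := by
    rw [hxdef, div_le_div_iff₀ (by linarith) (by norm_num)]; linarith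
  have hy0 : 0 < y := by positivity
  have hy1 : y ≤ 1/2 := by
    rw [hydef, div_le_div_iff₀ (by linarith) (by norm_num)]; linarith
  have hyx : y = x / (1 + x) := by
    rw [hxdef, hydef]
    field_simp
    ring
  obtain ⟨hsl, hsu⟩ := sinh_bounds hx0 hx1
  obtain ⟨htl, htu⟩ := sinh_bounds hy0 hy1
  have han : a n = Real.sinh x := by rw [ha n]
  have han1 : a (n+1) = Real.sinh y := by
    rw [ha (n+1)]; push_cast; ring_nf; rw [hydef]; ring_nf
  set s := Real.sinh x
  set t := Real.sinh y
  rw [han, han1]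
  have hs0 : 0 < s := lt_of_lt_of_le (by nlinarith [pow_pos hx0 3]) hsl
  have ht0 : 0 < t := lt_of_lt_of_le (by nlinarith [pow_pos hy0 3]) htl
  have h1x : (0:ℝ) < 1 + x := by linarith
  constructor
  · -- s*(1-s) ≤ t
    have key : x + x^3/6 + x^5/100 - (x + x^3/6)^2 ≤ y + y^3/6 := by
      rw [hyx]
      have e1 : x/(1+x) + (x/(1+x))^3/6 = (6*x*(1+x)^2 + x^3)/(6*(1+x)^3) := by
        field_simp
      rw [e1, le_div_iff₀ (by positivity)]
      nlinarith [pow_pos hx0 2, pow_pos hx0 3, pow_pos hx0 4, pow_pos hx0 5, pow_pos hx0 6,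
        pow_pos hx0 7, pow_pos hx0 8, mul_pos hx0 hx0, sq_nonneg x, sq_nonneg (1-2*x)]
    have hss : (x + x^3/6)^2 ≤ s^2 := pow_le_pow_left₀ (by positivity) hsl 2
    nlinarith [hss]
  · -- t ≤ s/(1+s)
    rw [le_div_iff₀ (by linarith)]
    have key : (y + y^3/6 + y^5/100) * (1 + (x + x^3/6 + x^5/100)) ≤ x + x^3/6 := by
      rw [hyx]
      have e2 : x/(1+x) + (x/(1+x))^3/6 + (x/(1+x))^5/100
          = (300*x*(1+x)^4 + 50*x^3*(1+x)^2 + 3*x^5)/(300*(1+x)^5) := by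
        field_simp; ring
      rw [e2, div_mul_eq_mul_div, div_le_iff₀ (by positivity)]
      nlinarith [pow_pos hx0 2, pow_pos hx0 3, pow_pos hx0 4, pow_pos hx0 5, pow_pos hx0 6,
        pow_pos hx0 7, pow_pos hx0 8, pow_pos hx0 9, pow_pos hx0 10, mul_pos hx0 hx0,
        sq_nonneg (1-2*x)]
    have hY0 : (0:ℝ) ≤ y + y^3/6 + y^5/100 := by positivity
    have h2 : t * (1+s) ≤ (y + y^3/6 + y^5/100) * (1 + (x + x^3/6 + x^5/100)) :=
      mul_le_mul htu (by linarith) (by linarith) hY0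
    linarith
end

section
/- (tan(1) - 1)^2 + Σ_{n=1}^{∞} (1/(n+1) + (1/3)(1/(n+1))^3)^2 > 1.01. -/
open Finset Real

theorem aux_tan_one_gt : Real.tan 1 > 1.55733 := by
  have hc : Real.cos 1 < 0.5403057 := by
    have h := Complex.exp_bound (x := Complex.I) (by simp) (n := 8) (by norm_num)
    have hre : (Complex.exp Complex.I).re = Real.cos 1 := by
      simpa using Complex.exp_ofReal_mul_I_re 1
    have hS : (∑ m ∈ range 8, Complex.I ^ m / m.factorial).re = 389/720 := by
      norm_num [Finset.sum_range_succ, Complex.ext_iff, pow_succ, Nat.factorial]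
    have hab : |(Complex.exp Complex.I - ∑ m ∈ range 8, Complex.I ^ m / m.factorial).re|
        ≤ ‖(Complex.exp Complex.I - ∑ m ∈ range 8, Complex.I ^ m / m.factorial)‖ :=
      Complex.abs_re_le_norm _
    rw [Complex.sub_re, hre, hS] at hab
    have h2 := le_trans hab h
    simp [Complex.norm_I, Nat.factorial] at h2
    have := abs_le.mp h2
    norm_num at this ⊢
    linarith [this.2]
  have hs : Real.sin 1 > 0.841440 := by
    have h := Complex.exp_bound (x := Complex.I) (by simp) (n := 8) (by norm_num)
    have him : (Complex.exp Complex.I).im = Real.sin 1 := by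
      simpa using Complex.exp_ofReal_mul_I_im 1
    have hS : (∑ m ∈ range 8, Complex.I ^ m / m.factorial).im = 4241/5040 := by
      norm_num [Finset.sum_range_succ, Complex.ext_iff, pow_succ, Nat.factorial]
    have hab : |(Complex.exp Complex.I - ∑ m ∈ range 8, Complex.I ^ m / m.factorial).im|
        ≤ ‖(Complex.exp Complex.I - ∑ m ∈ range 8, Complex.I ^ m / m.factorial)‖ :=
      Complex.abs_im_le_norm _
    rw [Complex.sub_im, him, hS] at hab
    have h2 := le_trans hab h
    simp [Complex.norm_I, Nat.factorial] at h2
    have := abs_le.mp h2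
    norm_num at this ⊢
    linarith [this.1]
  have hcpos := Real.cos_one_pos
  rw [Real.tan_eq_sin_div_cos, gt_iff_lt, lt_div_iff₀ hcpos]
  nlinarith

theorem aux_hs2 : HasSum (fun n : ℕ => 1/((n:ℝ)+2)^2) (π^2/6 - 1) := by
  have h := (hasSum_nat_add_iff' (f := fun n : ℕ => 1/(n:ℝ)^2) 2).mpr hasSum_zeta_two
  simpa [Finset.sum_range_succ] using h

theorem aux_hs4 : HasSum (fun n : ℕ => 1/((n:ℝ)+2)^4) (π^4/90 - 1) := by
  have h := (hasSum_nat_add_iff' (f := fun n : ℕ => 1/(n:ℝ)^4) 2).mpr hasSum_zeta_four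
  simpa [Finset.sum_range_succ] using h

theorem aux_hs6 : Summable (fun n : ℕ => (1/9) * (1/((n:ℝ)+2))^6) := by
  refine Summable.of_nonneg_of_le (fun n => by positivity) (fun n => ?_) aux_hs2.summable
  have hn : (0:ℝ) ≤ (n:ℝ) := Nat.cast_nonneg n
  have h1 : (1:ℝ) ≤ (n:ℝ)+2 := by linarith
  rw [div_pow, one_pow, mul_one_div, div_le_div_iff₀ (by positivity) (by positivity)]
  nlinarith [pow_le_pow_left₀ (by norm_num : (0:ℝ) ≤ 1) h1 4, sq_nonneg ((n:ℝ)+2)]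

theorem aux_keysum : ∑' n : ℕ, (1/((n:ℝ)+1+1) + (1/3)*(1/((n:ℝ)+1+1))^3)^2
    ≥ (π^2/6 - 1) + (2/3)*(π^4/90 - 1) := by
  have hg : HasSum (fun n : ℕ => 1/((n:ℝ)+2)^2 + (2/3)*(1/((n:ℝ)+2)^4))
      ((π^2/6 - 1) + (2/3)*(π^4/90 - 1)) := aux_hs2.add (aux_hs4.mul_left _)
  have heq : ∀ n : ℕ, (1/((n:ℝ)+1+1) + (1/3)*(1/((n:ℝ)+1+1))^3)^2
      = (1/((n:ℝ)+2)^2 + (2/3)*(1/((n:ℝ)+2)^4)) + (1/9)*(1/((n:ℝ)+2))^6 := by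
    intro n
    have h : ((n:ℝ)+2) ≠ 0 := by positivity
    field_simp
    ring
  have hf : Summable (fun n : ℕ => (1/((n:ℝ)+1+1) + (1/3)*(1/((n:ℝ)+1+1))^3)^2) := by
    simp_rw [heq]; exact (hg.summable.add aux_hs6)
  calc ∑' n : ℕ, (1/((n:ℝ)+1+1) + (1/3)*(1/((n:ℝ)+1+1))^3)^2
      ≥ ∑' n : ℕ, (1/((n:ℝ)+2)^2 + (2/3)*(1/((n:ℝ)+2)^4)) := by
        refine Summable.tsum_le_tsum (fun n => ?_) hg.summable hf
        rw [heq n]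
        have : (0:ℝ) ≤ (1/9)*(1/((n:ℝ)+2))^6 := by positivity
        linarith
    _ = (π^2/6 - 1) + (2/3)*(π^4/90 - 1) := hg.tsum_eq

theorem stmt_14 :
    (Real.tan 1 - 1)^2 +
      ∑' n : ℕ, (1/((n:ℝ)+1+1) + (1/3)*(1/((n:ℝ)+1+1))^3)^2 > 1.01 := by
  have ht := aux_tan_one_gt
  have hsum := aux_keysum
  have hπ : π > 3.141592 := Real.pi_gt_d6
  have hπ2 : π^2 > 9.8696 := by nlinarith
  have hπ4 : π^4 > 97.409 := by nlinarith
  have h1 : (π^2/6 - 1) + (2/3)*(π^4/90 - 1) > 0.699814 := by linarith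
  have h2 : (Real.tan 1 - 1)^2 > 0.310616 := by nlinarith [sq_nonneg (Real.tan 1 - 1.55733)]
  norm_num at h2 hsum ⊢
  linarith
end

section
/- (tan(1) - 1)^2 + (ζ(2) - 1) + (2/3)(ζ(4) - 1) + (1/9)(ζ(6) - 1) > 1.01, where ζ is the Riemann zeta function at positive even integers, i.e., ζ(2) = π²/6, ζ(4) = π⁴/90, ζ(6) = π⁶/945. -/
private lemma prod_bnd {x y a b c d : ℝ} (hx : a ≤ x) (hx' : x ≤ b) (hy : c ≤ y)
    (hy' : y ≤ d) (ha : 0 ≤ a) (hc : 0 ≤ c) :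
    2*a*c ≤ 2*x*y ∧ 2*x*y ≤ 2*b*d := by
  constructor
  · nlinarith [mul_nonneg (sub_nonneg.2 hx) (sub_nonneg.2 hy)]
  · nlinarith [mul_nonneg (sub_nonneg.2 hx') (sub_nonneg.2 hy')]

private lemma sq_bnd {x a b : ℝ} (hx : a ≤ x) (hx' : x ≤ b) (ha : 0 ≤ a) :
    1 - 2*b^2 ≤ 1 - 2*x^2 ∧ 1 - 2*x^2 ≤ 1 - 2*a^2 := by
  constructor
  · nlinarith [mul_nonneg (sub_nonneg.2 hx) (sub_nonneg.2 hx')]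
  · nlinarith [mul_nonneg (sub_nonneg.2 hx) (sub_nonneg.2 hx')]

set_option maxHeartbeats 2000000 in
theorem stmt_15 :
    (Real.tan 1 - 1)^2 + (Real.pi^2/6 - 1) + (2/3)*(Real.pi^4/90 - 1) +
      (1/9)*(Real.pi^6/945 - 1) > 1.01 := by
  have habs : |(1/8 : ℝ)| ≤ 1 := by rw [abs_of_pos] <;> norm_num
  have hs8 := Real.sin_bound habs
  have hc8 := Real.cos_bound habs
  rw [abs_le] at hs8 hc8
  rw [abs_of_pos (by norm_num : (0:ℝ) < 1/8)] at hs8 hc8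
  norm_num at hs8 hc8
  have bs8l : (0.12466 : ℝ) ≤ Real.sin (1/8) := by linarith [hs8.1]
  have bs8u : Real.sin (1/8) ≤ (0.12469 : ℝ) := by linarith [hs8.2]
  have bc8l : (0.99216 : ℝ) ≤ Real.cos (1/8) := by linarith [hc8.1]
  have bc8u : Real.cos (1/8) ≤ (0.99221 : ℝ) := by linarith [hc8.2]
  clear hs8 hc8 habs
  have pyth := Real.sin_sq_add_cos_sq (1/8 : ℝ)
  have e4s : Real.sin (1/4) = 2 * Real.sin (1/8) * Real.cos (1/8) := by
    rw [← Real.sin_two_mul]; norm_num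
  have e4c : Real.cos (1/4) = 1 - 2 * Real.sin (1/8)^2 := by
    rw [show (1/4:ℝ) = 2*(1/8) by norm_num, Real.cos_two_mul]; linarith
  have h4 := prod_bnd bs8l bs8u bc8l bc8u (by norm_num) (by norm_num)
  have h4c := sq_bnd bs8l bs8u (by norm_num)
  rw [← e4s] at h4
  rw [← e4c] at h4c
  have bs4l : (0.24736 : ℝ) ≤ Real.sin (1/4) := by nlinarith [h4.1]
  have bs4u : Real.sin (1/4) ≤ (0.24744 : ℝ) := by nlinarith [h4.2]
  have bc4l : (0.96890 : ℝ) ≤ Real.cos (1/4) := by nlinarith [h4c.1]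
  have bc4u : Real.cos (1/4) ≤ (0.96892 : ℝ) := by nlinarith [h4c.2]
  clear h4 h4c pyth e4s e4c bs8l bs8u bc8l bc8u
  have pyth := Real.sin_sq_add_cos_sq (1/4 : ℝ)
  have e2s : Real.sin (1/2) = 2 * Real.sin (1/4) * Real.cos (1/4) := by
    rw [← Real.sin_two_mul]; norm_num
  have e2c : Real.cos (1/2) = 1 - 2 * Real.sin (1/4)^2 := by
    rw [show (1/2:ℝ) = 2*(1/4) by norm_num, Real.cos_two_mul]; linarith
  have h2 := prod_bnd bs4l bs4u bc4l bc4u (by norm_num) (by norm_num)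
  have h2c := sq_bnd bs4l bs4u (by norm_num)
  rw [← e2s] at h2
  rw [← e2c] at h2c
  have bs2l : (0.47933 : ℝ) ≤ Real.sin (1/2) := by nlinarith [h2.1]
  have bs2u : Real.sin (1/2) ≤ (0.47950 : ℝ) := by nlinarith [h2.2]
  have bc2l : (0.87754 : ℝ) ≤ Real.cos (1/2) := by nlinarith [h2c.1]
  have bc2u : Real.cos (1/2) ≤ (0.87763 : ℝ) := by nlinarith [h2c.2]
  clear h2 h2c pyth e2s e2c bs4l bs4u bc4l bc4u
  have pyth := Real.sin_sq_add_cos_sq (1/2 : ℝ)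
  have e1s : Real.sin 1 = 2 * Real.sin (1/2) * Real.cos (1/2) := by
    rw [← Real.sin_two_mul]; norm_num
  have e1c : Real.cos 1 = 1 - 2 * Real.sin (1/2)^2 := by
    rw [show (1:ℝ) = 2*(1/2) by norm_num, Real.cos_two_mul]; linarith
  have h1 := prod_bnd bs2l bs2u bc2l bc2u (by norm_num) (by norm_num)
  have h1c := sq_bnd bs2l bs2u (by norm_num)
  rw [← e1s] at h1
  rw [← e1c] at h1c
  have bs1l : (0.84127 : ℝ) ≤ Real.sin 1 := by nlinarith [h1.1]
  have bc1l : (0.54015 : ℝ) ≤ Real.cos 1 := by nlinarith [h1c.1]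
  have bc1u : Real.cos 1 ≤ (0.54049 : ℝ) := by nlinarith [h1c.2]
  clear h1 h1c pyth e1s e1c bs2l bs2u bc2l bc2u
  have hc1pos : (0:ℝ) < Real.cos 1 := by linarith
  have htan : (1.5564 : ℝ) ≤ Real.tan 1 := by
    rw [Real.tan_eq_sin_div_cos, le_div_iff₀ hc1pos]
    nlinarith
  clear bs1l bc1l bc1u
  have hpi := Real.pi_gt_d6
  have hpi0 : (0:ℝ) < Real.pi := Real.pi_pos
  have hp2 : (9.8696 : ℝ) ≤ Real.pi^2 := by nlinarith
  have hp4 : (97.409 : ℝ) ≤ Real.pi^4 := by nlinarith [sq_nonneg (Real.pi^2 - 9.8696)]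
  have hp6 : (961.387 : ℝ) ≤ Real.pi^6 := by
    calc (961.387:ℝ) ≤ 9.8696*97.409 := by norm_num
    _ ≤ Real.pi^2 * Real.pi^4 := mul_le_mul hp2 hp4 (by norm_num) (by positivity)
    _ = Real.pi^6 := by ring
  have ht2 : (0.30958 : ℝ) ≤ (Real.tan 1 - 1)^2 := by nlinarith
  norm_num
  nlinarith
end

section
/- The sequence (n+1)·tan(1/(n+1)) is strictly decreasing in n, while the sequences (n+1)·sin(1/(n+1)), (n+1)·ln(1+1/(n+1)), and (n+1)·arctan(1/(n+1)) are each strictly increasing in n with limit 1. -/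
open Real Filter Set

private lemma aux_pos (n : ℕ) : (0:ℝ) < 1/((n:ℝ)+1) := by positivity

private lemma aux_anti : StrictAnti (fun n : ℕ => 1/((n:ℝ)+1)) := by
  intro m n h
  apply one_div_lt_one_div_of_lt (by positivity)
  have : (m:ℝ) < n := by exact_mod_cast h
  linarith

private lemma aux_eq (f : ℝ → ℝ) (n : ℕ) :
    f (1/((n:ℝ)+1)) / (1/((n:ℝ)+1)) = ((n:ℝ)+1) * f (1/((n:ℝ)+1)) := by
  rw [one_div, div_eq_mul_inv, inv_inv, mul_comm]

private lemma seq_of_anti {f : ℝ → ℝ} {s : Set ℝ} (hs : ∀ n : ℕ, 1/((n:ℝ)+1) ∈ s)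
    (h : StrictAntiOn (fun x => f x / x) s) :
    StrictMono (fun n : ℕ => ((n:ℝ)+1) * f (1/((n:ℝ)+1))) := by
  intro m n hmn
  have h1 := h (hs n) (hs m) (aux_anti hmn)
  simpa only [aux_eq] using h1

private lemma seq_of_mono {f : ℝ → ℝ} {s : Set ℝ} (hs : ∀ n : ℕ, 1/((n:ℝ)+1) ∈ s)
    (h : StrictMonoOn (fun x => f x / x) s) :
    StrictAnti (fun n : ℕ => ((n:ℝ)+1) * f (1/((n:ℝ)+1))) := by
  intro m n hmn
  have h1 := h (hs n) (hs m) (aux_anti hmn)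
  simpa only [aux_eq] using h1

private lemma tendsto_helper {f : ℝ → ℝ} (h0 : f 0 = 0) (hd : HasDerivAt f 1 0) :
    Tendsto (fun n : ℕ => ((n:ℝ)+1) * f (1/((n:ℝ)+1))) atTop (nhds 1) := by
  have hs := hasDerivAt_iff_tendsto_slope.mp hd
  have hx : Tendsto (fun n : ℕ => 1/((n:ℝ)+1)) atTop (nhdsWithin 0 {(0:ℝ)}ᶜ) := by
    apply tendsto_nhdsWithin_of_tendsto_nhds_of_eventually_within
    · exact (tendsto_one_div_add_atTop_nhds_zero_nat : Tendsto (fun n : ℕ => 1/((n:ℝ)+1)) atTop (nhds 0))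
    · filter_upwards with n
      exact (aux_pos n).ne'
  refine (hs.comp hx).congr fun n => ?_
  simp only [Function.comp_apply, slope_def_field, h0, sub_zero]
  exact aux_eq f n

private lemma mem_Ioo_pi (n : ℕ) : 1/((n:ℝ)+1) ∈ Ioo (0:ℝ) (π/2) := by
  refine ⟨aux_pos n, ?_⟩
  have h1 : 1/((n:ℝ)+1) ≤ 1 := by
    rw [div_le_one (by positivity)]
    simp
  have := Real.pi_gt_three
  linarith

private lemma mem_Ioi' (n : ℕ) : 1/((n:ℝ)+1) ∈ Ioi (0:ℝ) := aux_pos n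

private lemma sin_cos_lt (x : ℝ) (hx : 0 < x) : Real.sin x * Real.cos x < x := by
  have h := Real.sin_lt (by linarith : 0 < 2*x)
  have h2 := Real.sin_two_mul x
  linarith

private lemma tan_part : StrictMonoOn (fun x => Real.tan x / x) (Ioo (0:ℝ) (π/2)) := by
  have hder : ∀ x ∈ Ioo (0:ℝ) (π/2),
      HasDerivAt (fun x => Real.tan x / x)
        ((1 / Real.cos x ^ 2 * x - Real.tan x * 1) / x ^ 2) x := by
    intro x hx
    have hc : 0 < Real.cos x :=
      Real.cos_pos_of_mem_Ioo ⟨by linarith [hx.1, Real.pi_pos], hx.2⟩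
    exact (Real.hasDerivAt_tan hc.ne').div (hasDerivAt_id x) hx.1.ne'
  apply strictMonoOn_of_deriv_pos (convex_Ioo _ _)
  · exact fun x hx => (hder x hx).continuousAt.continuousWithinAt
  · intro x hx
    rw [interior_Ioo] at hx
    rw [(hder x hx).deriv]
    have hc : 0 < Real.cos x :=
      Real.cos_pos_of_mem_Ioo ⟨by linarith [hx.1, Real.pi_pos], hx.2⟩
    have key := sin_cos_lt x hx.1
    have heq : 1 / Real.cos x ^ 2 * x - Real.tan x * 1
        = (x - Real.sin x * Real.cos x) / Real.cos x ^ 2 := by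
      rw [Real.tan_eq_sin_div_cos]
      field_simp
    rw [heq]
    exact div_pos (div_pos (by linarith) (by positivity)) (pow_pos hx.1 2)

private lemma sin_part : StrictAntiOn (fun x => Real.sin x / x) (Ioo (0:ℝ) (π/2)) := by
  have hder : ∀ x ∈ Ioo (0:ℝ) (π/2),
      HasDerivAt (fun x => Real.sin x / x)
        ((Real.cos x * x - Real.sin x * 1) / x ^ 2) x := by
    intro x hx
    exact (Real.hasDerivAt_sin x).div (hasDerivAt_id x) hx.1.ne'
  apply strictAntiOn_of_deriv_neg (convex_Ioo _ _)
  · exact fun x hx => (hder x hx).continuousAt.continuousWithinAt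
  · intro x hx
    rw [interior_Ioo] at hx
    rw [(hder x hx).deriv]
    have hc : 0 < Real.cos x :=
      Real.cos_pos_of_mem_Ioo ⟨by linarith [hx.1, Real.pi_pos], hx.2⟩
    have ht := Real.lt_tan hx.1 hx.2
    rw [Real.tan_eq_sin_div_cos, lt_div_iff₀ hc] at ht
    apply div_neg_of_neg_of_pos _ (pow_pos hx.1 2)
    nlinarith

private lemma log_lb (x : ℝ) (hx : 0 < x) : x / (1+x) < Real.log (1+x) := by
  have h1x : (0:ℝ) < 1 + x := by linarith
  have h := Real.log_lt_sub_one_of_pos (show (0:ℝ) < 1/(1+x) by positivity)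
    (by
      intro h
      rw [div_eq_one_iff_eq h1x.ne'] at h
      linarith)
  rw [one_div, Real.log_inv] at h
  have h2 : (1+x)⁻¹ - 1 = -(x/(1+x)) := by field_simp; ring
  rw [h2] at h
  linarith

private lemma log_part : StrictAntiOn (fun x => Real.log (1+x) / x) (Ioi (0:ℝ)) := by
  have hder : ∀ x ∈ Ioi (0:ℝ),
      HasDerivAt (fun x => Real.log (1+x) / x)
        ((1/(1+x) * x - Real.log (1+x) * 1) / x ^ 2) x := by
    intro x hx
    have h1x : (0:ℝ) < 1 + x := by simp at hx; linarith
    have hin : HasDerivAt (fun x : ℝ => 1 + x) 1 x := (hasDerivAt_id x).const_add 1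
    have hl : HasDerivAt (fun x : ℝ => Real.log (1+x)) (1/(1+x)) x := by
      simpa using hin.log h1x.ne'
    exact hl.div (hasDerivAt_id x) (ne_of_gt hx)
  apply strictAntiOn_of_deriv_neg (convex_Ioi _)
  · exact fun x hx => (hder x hx).continuousAt.continuousWithinAt
  · intro x hx
    rw [interior_Ioi] at hx
    rw [(hder x hx).deriv]
    have hx0 : (0:ℝ) < x := hx
    have h1x : (0:ℝ) < 1 + x := by linarith
    have key := log_lb x hx0
    apply div_neg_of_neg_of_pos _ (pow_pos (by assumption) 2)
    have : 1/(1+x) * x = x/(1+x) := by ring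
    rw [this]
    linarith

private lemma arctan_lb (x : ℝ) (hx : 0 < x) : x / (1+x^2) < Real.arctan x := by
  have hmono : StrictMonoOn (fun x => Real.arctan x - x/(1+x^2)) (Ici (0:ℝ)) := by
    have hder : ∀ x : ℝ, HasDerivAt (fun x => Real.arctan x - x/(1+x^2))
        (1/(1+x^2) - (1*(1+x^2) - x*(2*x^1))/(1+x^2)^2) x := by
      intro x
      have h1 : (0:ℝ) < 1 + x^2 := by positivity
      have hin : HasDerivAt (fun x : ℝ => 1 + x^2) (2*x^1) x :=
        (hasDerivAt_pow 2 x).const_add 1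
      exact (Real.hasDerivAt_arctan x).sub ((hasDerivAt_id x).div hin h1.ne')
    apply strictMonoOn_of_deriv_pos (convex_Ici _)
    · exact fun x _ => (hder x).continuousAt.continuousWithinAt
    · intro x hx
      rw [interior_Ici] at hx
      have hx0 : (0:ℝ) < x := hx
      rw [(hder x).deriv]
      have h1 : (0:ℝ) < 1 + x^2 := by positivity
      have heq : 1/(1+x^2) - (1*(1+x^2) - x*(2*x^1))/(1+x^2)^2
          = 2*x^2/(1+x^2)^2 := by
        field_simp
        ring
      rw [heq]
      positivity
  have := hmono (self_mem_Ici) (show x ∈ Ici (0:ℝ) from hx.le) hx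
  simpa using this

private lemma arctan_part : StrictAntiOn (fun x => Real.arctan x / x) (Ioi (0:ℝ)) := by
  have hder : ∀ x ∈ Ioi (0:ℝ),
      HasDerivAt (fun x => Real.arctan x / x)
        ((1/(1+x^2) * x - Real.arctan x * 1) / x ^ 2) x := by
    intro x hx
    exact (Real.hasDerivAt_arctan x).div (hasDerivAt_id x) (ne_of_gt hx)
  apply strictAntiOn_of_deriv_neg (convex_Ioi _)
  · exact fun x hx => (hder x hx).continuousAt.continuousWithinAt
  · intro x hx
    rw [interior_Ioi] at hx
    have hx0 : (0:ℝ) < x := hx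
    rw [(hder x hx).deriv]
    have key := arctan_lb x hx0
    apply div_neg_of_neg_of_pos _ (pow_pos (by assumption) 2)
    have : 1/(1+x^2) * x = x/(1+x^2) := by ring
    rw [this]
    linarith

theorem stmt_17 :
    (StrictAnti fun n : ℕ => ((n:ℝ)+1) * Real.tan (1/((n:ℝ)+1))) ∧
    (StrictMono fun n : ℕ => ((n:ℝ)+1) * Real.sin (1/((n:ℝ)+1))) ∧
    (Filter.Tendsto (fun n : ℕ => ((n:ℝ)+1) * Real.sin (1/((n:ℝ)+1)))
      Filter.atTop (nhds 1)) ∧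
    (StrictMono fun n : ℕ => ((n:ℝ)+1) * Real.log (1 + 1/((n:ℝ)+1))) ∧
    (Filter.Tendsto (fun n : ℕ => ((n:ℝ)+1) * Real.log (1 + 1/((n:ℝ)+1)))
      Filter.atTop (nhds 1)) ∧
    (StrictMono fun n : ℕ => ((n:ℝ)+1) * Real.arctan (1/((n:ℝ)+1))) ∧
    (Filter.Tendsto (fun n : ℕ => ((n:ℝ)+1) * Real.arctan (1/((n:ℝ)+1)))
      Filter.atTop (nhds 1)) := by
  refine ⟨seq_of_mono mem_Ioo_pi tan_part,
    seq_of_anti mem_Ioo_pi sin_part,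
    tendsto_helper Real.sin_zero (by simpa using Real.hasDerivAt_sin 0),
    seq_of_anti mem_Ioi' log_part,
    tendsto_helper (f := fun x => Real.log (1+x)) (by simp) ?_,
    seq_of_anti mem_Ioi' arctan_part,
    tendsto_helper Real.arctan_zero (by simpa using Real.hasDerivAt_arctan 0)⟩
  have hin : HasDerivAt (fun x : ℝ => 1 + x) 1 (0:ℝ) := (hasDerivAt_id 0).const_add 1
  simpa using hin.log (by norm_num)
end
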